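/- arXiv:2301.00315 — 3 statements merged into one kernel-verified Lean document; each statement's English description precedes it below -/
import Mathlib

section
/- Let F = a_n ∏_{j=1}^n (x − α_j) with a_n ≠ 0 and let G₁,…,G_n ∈ ℂ[x] of degree at most 2n−2. Then the determinant polynomial of the (2n−1)-vector (F x^{n−2}, …, F x^0, G₁, …, G_n) equals a_n^{n−1}·det(G_i(α_j))_{i,j} / V(α₁,…,α_n), where V is the Vandermonde determinant; equivalently, dp(Fx^{n−2},…,Fx^0,G₁,…,G_n)·V(α₁,…,α_n) = a_n^{n−1}·det(G_i(α_j)). -/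
open Polynomial
open Finset Matrix

lemma prod_Ioi_rev {k : ℕ} (f : Fin k → Fin k → ℂ) :
    ∏ i : Fin k, ∏ j ∈ Finset.Ioi i, f (Fin.rev j) (Fin.rev i)
      = ∏ i : Fin k, ∏ j ∈ Finset.Ioi i, f i j := by
  rw [Finset.prod_sigma', Finset.prod_sigma']
  refine Finset.prod_nbij' (fun p => ⟨Fin.rev p.2, Fin.rev p.1⟩)
    (fun p => ⟨Fin.rev p.2, Fin.rev p.1⟩) ?_ ?_ ?_ ?_ ?_ <;>
    simp [Fin.rev_lt_rev]

lemma Ioi_castAdd' {p q : ℕ} (i : Fin p) :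
    Finset.Ioi (Fin.castAdd q i) =
      (Finset.Ioi i).map (Fin.castAddEmb q) ∪ Finset.univ.map (Fin.natAddEmb p) := by
  ext t
  simp only [Finset.mem_Ioi, Finset.mem_union, Finset.mem_map, Fin.castAddEmb, Fin.natAddEmb,
    Finset.mem_univ, true_and, Function.Embedding.coeFn_mk, Fin.lt_def, Fin.coe_castAdd]
  constructor
  · intro h
    by_cases hp : (t : ℕ) < p
    · exact Or.inl ⟨⟨t, hp⟩, h, Fin.ext rfl⟩
    · exact Or.inr ⟨⟨(t : ℕ) - p, by omega⟩, Fin.ext (show p + ((t : ℕ) - p) = t by omega)⟩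
  · rintro (⟨j, hj, rfl⟩ | ⟨j, rfl⟩)
    · exact hj
    · exact Nat.lt_of_lt_of_le i.isLt (Nat.le_add_right _ _)

lemma Ioi_natAdd' {p q : ℕ} (k : Fin q) :
    Finset.Ioi (Fin.natAdd p k) = (Finset.Ioi k).map (Fin.natAddEmb p) := by
  ext t
  simp only [Finset.mem_Ioi, Finset.mem_map, Fin.natAddEmb, Function.Embedding.coeFn_mk,
    Fin.lt_def, Fin.coe_natAdd]
  constructor
  · intro h
    refine ⟨⟨(t : ℕ) - p, by omega⟩, by simp; omega, Fin.ext ?_⟩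
    exact (show p + ((t : ℕ) - p) = t by omega)
  · rintro ⟨j, hj, rfl⟩
    exact (show p + (k : ℕ) < p + j by omega)

lemma prod_pairs_append {p q : ℕ} (u : Fin p → ℂ) (w : Fin q → ℂ) :
    (∏ i : Fin (p+q), ∏ j ∈ Ioi i, (Fin.append u w j - Fin.append u w i))
  = ((∏ i : Fin p, ∏ j ∈ Ioi i, (u j - u i)) * (∏ i : Fin q, ∏ j ∈ Ioi i, (w j - w i)))
    * ∏ i : Fin p, ∏ j : Fin q, (w j - u i) := by
  rw [Fin.prod_univ_add]
  have h1 : ∀ i : Fin p, (∏ j ∈ Ioi (Fin.castAdd q i),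
      (Fin.append u w j - Fin.append u w (Fin.castAdd q i)))
      = (∏ j ∈ Ioi i, (u j - u i)) * ∏ j : Fin q, (w j - u i) := by
    intro i
    rw [Ioi_castAdd', Finset.prod_union, Finset.prod_map, Finset.prod_map]
    · simp only [show ∀ j : Fin p, (Fin.castAddEmb q) j = Fin.castAdd q j from fun _ => rfl,
        show ∀ j : Fin q, (Fin.natAddEmb p) j = Fin.natAdd p j from fun _ => rfl,
        Fin.append_left, Fin.append_right]
    · rw [Finset.disjoint_left]
      rintro t ht ht'
      simp only [Finset.mem_map, Fin.castAddEmb, Fin.natAddEmb, Function.Embedding.coeFn_mk,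
        Finset.mem_univ, true_and] at ht ht'
      obtain ⟨j, -, rfl⟩ := ht
      obtain ⟨l, hl⟩ := ht'
      have := congrArg Fin.val hl
      replace this : p + (l : ℕ) = j := this
      omega
  have h2 : ∀ k : Fin q, (∏ j ∈ Ioi (Fin.natAdd p k),
      (Fin.append u w j - Fin.append u w (Fin.natAdd p k)))
      = ∏ j ∈ Ioi k, (w j - w k) := by
    intro k
    rw [Ioi_natAdd', Finset.prod_map]
    simp only [show ∀ j : Fin q, (Fin.natAddEmb p) j = Fin.natAdd p j from fun _ => rfl,
      Fin.append_right]
  simp only [h1, h2, Finset.prod_mul_distrib]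
  ring

lemma append_apply_lt {p q : ℕ} (u : Fin p → ℂ) (w : Fin q → ℂ) (t : Fin (p+q))
    (h : (t : ℕ) < p) : Fin.append u w t = u ⟨t, h⟩ := by
  rw [show Fin.append u w t = Fin.append u w (Fin.castAdd q ⟨(t : ℕ), h⟩) from
    congrArg _ (Fin.ext rfl), Fin.append_left]

lemma append_apply_ge {p q : ℕ} (u : Fin p → ℂ) (w : Fin q → ℂ) (t : Fin (p+q))
    (h : p ≤ (t : ℕ)) : Fin.append u w t = w ⟨(t : ℕ) - p, by omega⟩ := by
  rw [show Fin.append u w t = Fin.append u w (Fin.natAdd p ⟨(t : ℕ) - p, by omega⟩) from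
    congrArg _ (Fin.ext (by simp [Fin.natAdd]; omega)), Fin.append_right]

lemma key (m : ℕ) (a : ℂ) (ha : a ≠ 0) (α : Fin (m+1) → ℂ) (F : Polynomial ℂ)
    (hF : F = C a * ∏ j : Fin (m+1), (X - C (α j)))
    (G : Fin (m+1) → Polynomial ℂ) (hG : ∀ i, (G i).natDegree ≤ 2 * m) :
    (Matrix.of fun r c : Fin m ⊕ Fin (m+1) =>
        (Sum.elim (fun i : Fin m => F * X ^ (m - 1 - (i : ℕ))) G r).coeff
          (2 * m - ((finSumFinEquiv c : Fin (m + (m+1))) : ℕ))).det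
      * (∏ i : Fin (m+1), ∏ j ∈ Finset.Ioi i, (α i - α j))
      = a ^ m * (Matrix.of fun i j : Fin (m+1) => (G i).eval (α j)).det := by
  classical
  -- choose auxiliary points β
  obtain ⟨β, hβinj, hβα⟩ : ∃ β : Fin m → ℂ, Function.Injective β ∧ ∀ l j, β l ≠ α j := by
    have h : ((Set.range α)ᶜ : Set ℂ).Infinite := (Set.finite_range α).infinite_compl
    let e : ℕ ↪ ((Set.range α)ᶜ : Set ℂ) := Set.Infinite.natEmbedding _ h
    refine ⟨fun l => (e (l : ℕ) : ℂ), fun x y hxy => ?_, fun l j hlj => ?_⟩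
    · exact Fin.ext (e.injective (Subtype.ext hxy))
    · exact (e (l : ℕ)).2 ⟨j, hlj.symm⟩
  set P : Fin m ⊕ Fin (m+1) → Polynomial ℂ :=
    Sum.elim (fun i : Fin m => F * X ^ (m - 1 - (i : ℕ))) G with hP
  set ε : (Fin m ⊕ Fin (m+1)) ≃ Fin (m + (m+1)) := finSumFinEquiv.trans Fin.revPerm with hε
  set γ : Fin m ⊕ Fin (m+1) → ℂ := Sum.elim β α with hγ
  set v : Fin (m + (m+1)) → ℂ := fun t => γ (ε.symm t) with hv
  -- the matrices
  set M : Matrix (Fin m ⊕ Fin (m+1)) (Fin m ⊕ Fin (m+1)) ℂ :=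
    Matrix.of fun r c => (P r).coeff (2 * m - ((finSumFinEquiv c : Fin (m + (m+1))) : ℕ)) with hM
  set M' : Matrix (Fin (m + (m+1))) (Fin (m + (m+1))) ℂ :=
    Matrix.of fun p q => (P (ε.symm p)).coeff (q : ℕ) with hM'
  set W : Matrix (Fin (m + (m+1))) (Fin (m + (m+1))) ℂ :=
    Matrix.of fun q t => v t ^ (q : ℕ) with hW
  set D : Matrix (Fin (m+1)) (Fin (m+1)) ℂ := Matrix.of fun i j => (G i).eval (α j) with hD
  set A : Matrix (Fin m) (Fin m) ℂ :=
    Matrix.of fun i l => (F * X ^ (m - 1 - (i : ℕ))).eval (β l) with hA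
  -- basic facts
  have hFeval : ∀ j, F.eval (α j) = 0 := by
    intro j
    rw [hF]
    simp only [eval_mul, eval_C, eval_prod, eval_sub, eval_X]
    rw [Finset.prod_eq_zero (Finset.mem_univ j) (by simp)]
    ring
  have hdegF : F.natDegree ≤ m + 1 := by
    rw [hF]
    refine natDegree_mul_le.trans ?_
    rw [natDegree_C, zero_add]
    refine (natDegree_prod_le _ _).trans ?_
    simp [natDegree_X_sub_C]
  have hdegP : ∀ r, (P r).natDegree < m + (m+1) := by
    rintro (i | j)
    · have : (F * X ^ (m - 1 - (i : ℕ))).natDegree ≤ F.natDegree + (m - 1 - (i : ℕ)) :=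
        natDegree_mul_le.trans (by rw [natDegree_X_pow])
      have hi := i.isLt
      simp only [hP, Sum.elim_inl]
      omega
    · have := hG j
      simp only [hP, Sum.elim_inr]
      omega
  -- step 1 : det M = det M'
  have step1 : M.det = M'.det := by
    rw [← Matrix.det_submatrix_equiv_self ε.symm M]
    congr 1
    ext p q
    simp only [Matrix.submatrix_apply, hM, hM', Matrix.of_apply]
    congr 1
    have h1 : finSumFinEquiv (ε.symm q) = Fin.rev q := by
      simp [hε, Fin.revPerm]
    rw [h1, Fin.val_rev]
    omega
  -- step 2 : M' * W is the evaluation matrix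
  have step2 : M' * W = Matrix.of fun p t => (P (ε.symm p)).eval (v t) := by
    ext p t
    rw [Matrix.mul_apply]
    simp only [hM', hW, Matrix.of_apply]
    rw [eval_eq_sum_range' (hdegP (ε.symm p)) (v t), ← Fin.sum_univ_eq_sum_range]
  -- step 3 : the evaluation matrix reindexed over the sum type is block triangular
  have hvε : ∀ s, v (ε s) = γ s := by
    intro s; rw [hv]; simp
  have step3 : (Matrix.of fun p t => (P (ε.symm p)).eval (v t)).det = A.det * D.det := by
    rw [← Matrix.det_submatrix_equiv_self ε]
    have hblock : (Matrix.of fun p t => (P (ε.symm p)).eval (v t)).submatrix ε ε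
        = Matrix.fromBlocks A 0 (Matrix.of fun j l => (G j).eval (β l)) D := by
      ext r s
      rcases r with i | i <;> rcases s with l | l <;>
        simp only [Matrix.submatrix_apply, Matrix.of_apply, Equiv.symm_apply_apply, hvε, hP, hγ,
          Sum.elim_inl, Sum.elim_inr, Matrix.fromBlocks_apply₁₁, Matrix.fromBlocks_apply₁₂,
          Matrix.fromBlocks_apply₂₁, Matrix.fromBlocks_apply₂₂, hA, hD]
      · simp [eval_mul, hFeval l]
    rw [hblock, Matrix.det_fromBlocks_zero₁₂]
  -- step 4 : det A
  set B0 : Matrix (Fin m) (Fin m) ℂ := Matrix.of fun i l => β l ^ (m - 1 - (i : ℕ)) with hB0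
  have hAfact : A = B0 * Matrix.diagonal (fun l => F.eval (β l)) := by
    ext i l
    simp only [hA, hB0, Matrix.mul_diagonal, Matrix.of_apply, eval_mul, eval_pow, eval_X]
    ring
  have hB0det : B0.det = ∏ i : Fin m, ∏ j ∈ Ioi i, (β i - β j) := by
    have h1 : B0 = ((Matrix.vandermonde (β ∘ Fin.rev)).submatrix Fin.revPerm Fin.revPerm)ᵀ := by
      ext i l
      simp only [hB0, Matrix.of_apply, Matrix.transpose_apply, Matrix.submatrix_apply,
        Matrix.vandermonde_apply, Function.comp, Fin.revPerm_apply, Fin.rev_rev]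
      congr 1
      rw [Fin.val_rev]
      have := i.isLt
      omega
    rw [h1, Matrix.det_transpose, Matrix.det_submatrix_equiv_self, Matrix.det_vandermonde]
    have := prod_Ioi_rev (fun i j => β i - β j)
    simpa [Function.comp] using this
  have step4 : A.det = (∏ l : Fin m, F.eval (β l)) * ∏ i : Fin m, ∏ j ∈ Ioi i, (β i - β j) := by
    rw [hAfact, Matrix.det_mul, Matrix.det_diagonal, hB0det]
    ring
  -- step 5 : det W
  have hcast : m + (m+1) = (m+1) + m := by omega
  set app : Fin ((m+1) + m) → ℂ := Fin.append (α ∘ Fin.rev) (β ∘ Fin.rev) with happ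
  have hvapp : ∀ t, v t = app (Fin.cast hcast t) := by
    intro t
    obtain ⟨s, rfl⟩ := ε.surjective t
    rw [hvε]
    rcases s with i | j
    · have hi := i.isLt
      have hval : ((Fin.cast hcast (ε (Sum.inl i))) : ℕ) = 2 * m - (i : ℕ) := by
        simp [hε, Fin.val_rev]
        omega
      rw [happ, append_apply_ge _ _ _ (by omega)]
      simp only [hγ, Sum.elim_inl, Function.comp]
      congr 1
      apply Fin.ext
      simp only [Fin.val_rev, Fin.val_mk]
      omega
    · have hj := j.isLt
      have hval : ((Fin.cast hcast (ε (Sum.inr j))) : ℕ) = m - (j : ℕ) := by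
        simp [hε, Fin.val_rev]
        omega
      rw [happ, append_apply_lt _ _ _ (by omega)]
      simp only [hγ, Sum.elim_inr, Function.comp]
      congr 1
      apply Fin.ext
      simp only [Fin.val_rev, Fin.val_mk]
      omega
  have step5 : W.det = ((∏ i : Fin (m+1), ∏ j ∈ Ioi i, (α i - α j)) *
      (∏ i : Fin m, ∏ j ∈ Ioi i, (β i - β j))) *
      ∏ l : Fin m, ∏ j : Fin (m+1), (β l - α j) := by
    have h1 : W = (Matrix.vandermonde v)ᵀ := by
      ext q t
      simp [hW, Matrix.vandermonde_apply]
    have h2 : Matrix.vandermonde v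
        = (Matrix.vandermonde app).submatrix (finCongr hcast) (finCongr hcast) := by
      ext i j
      simp only [Matrix.vandermonde_apply, Matrix.submatrix_apply, finCongr_apply, Fin.coe_cast]
      rw [hvapp]
    rw [h1, Matrix.det_transpose, h2, Matrix.det_submatrix_equiv_self, Matrix.det_vandermonde,
      happ, prod_pairs_append]
    congr 1
    · congr 1
      · have := prod_Ioi_rev (fun i j => α i - α j)
        simpa [Function.comp] using this
      · have := prod_Ioi_rev (fun i j => β i - β j)
        simpa [Function.comp] using this
    · calc ∏ i : Fin (m+1), ∏ j : Fin m, ((β ∘ Fin.rev) j - (α ∘ Fin.rev) i)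
          = ∏ i : Fin (m+1), ∏ j : Fin m, (β j - (α ∘ Fin.rev) i) := by
            refine Finset.prod_congr rfl fun i _ => ?_
            exact Equiv.prod_comp Fin.revPerm (fun j => β j - (α ∘ Fin.rev) i)
        _ = ∏ i : Fin (m+1), ∏ j : Fin m, (β j - α i) :=
            Equiv.prod_comp Fin.revPerm (fun i => ∏ j : Fin m, (β j - α i))
        _ = ∏ l : Fin m, ∏ j : Fin (m+1), (β l - α j) := Finset.prod_comm
  -- eval of F at the β's
  have hFβ : ∏ l : Fin m, F.eval (β l)
      = a ^ m * ∏ l : Fin m, ∏ j : Fin (m+1), (β l - α j) := by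
    rw [hF]
    simp only [eval_mul, eval_C, eval_prod, eval_sub, eval_X]
    rw [Finset.prod_mul_distrib, Finset.prod_const, Finset.card_univ, Fintype.card_fin]
  -- nonvanishing
  have hVβ : (∏ i : Fin m, ∏ j ∈ Ioi i, (β i - β j)) ≠ 0 := by
    rw [Finset.prod_ne_zero_iff]
    intro i _
    rw [Finset.prod_ne_zero_iff]
    intro j hj
    exact sub_ne_zero_of_ne fun h => absurd (hβinj h) (Finset.mem_Ioi.mp hj).ne
  have hXβ : (∏ l : Fin m, ∏ j : Fin (m+1), (β l - α j)) ≠ 0 := by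
    rw [Finset.prod_ne_zero_iff]
    intro l _
    rw [Finset.prod_ne_zero_iff]
    intro j _
    exact sub_ne_zero_of_ne (hβα l j)
  apply mul_right_cancel₀ (mul_ne_zero hVβ hXβ)
  calc M.det * (∏ i : Fin (m+1), ∏ j ∈ Ioi i, (α i - α j)) *
        ((∏ i : Fin m, ∏ j ∈ Ioi i, (β i - β j)) * ∏ l : Fin m, ∏ j : Fin (m+1), (β l - α j))
      = M.det * W.det := by rw [step5]; ring
    _ = (M' * W).det := by rw [step1, Matrix.det_mul]
    _ = A.det * D.det := by rw [step2, step3]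
    _ = a ^ m * D.det *
        ((∏ i : Fin m, ∏ j ∈ Ioi i, (β i - β j)) * ∏ l : Fin m, ∏ j : Fin (m+1), (β l - α j)) := by
      rw [step4, hFβ]
      ring


/-- Let `F = a·∏ⱼ (x − αⱼ)` with `a ≠ 0` and `G₁,…,G_n` polynomials of
degree at most `2n−2`.  Then the determinant polynomial of the `(2n−1)`-vector
`(F x^{n−2}, …, F x^0, G₁, …, G_n)` (the determinant of the `(2n−1)×(2n−1)` matrix
of coefficients, highest degree `x^{2n−2}` first) times the Vandermonde determinant
`V(α₁,…,α_n) = ∏_{i<j}(αᵢ − αⱼ)` equals `a^{n−1}·det(Gᵢ(αⱼ))`. -/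
theorem dp_stack_eq_root_det (n : ℕ) (hn : 1 ≤ n) (a : ℂ) (ha : a ≠ 0)
    (α : Fin n → ℂ) (F : Polynomial ℂ)
    (hF : F = C a * ∏ j : Fin n, (X - C (α j)))
    (G : Fin n → Polynomial ℂ) (hG : ∀ i, (G i).natDegree ≤ 2 * n - 2) :
    Matrix.det (Matrix.of fun r c : Fin (n - 1) ⊕ Fin n =>
        (Sum.elim (fun i : Fin (n - 1) => F * X ^ (n - 2 - (i : ℕ)))
            (fun j : Fin n => G j) r).coeff (2 * n - 2 - ((finSumFinEquiv c : Fin ((n-1) + n)) : ℕ)))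
      * (∏ i : Fin n, ∏ j ∈ Finset.Ioi i, (α i - α j))
      = a ^ (n - 1) * Matrix.det (Matrix.of fun i j : Fin n => (G i).eval (α j)) := by
  obtain ⟨m, rfl⟩ : ∃ m, n = m + 1 := ⟨n - 1, by omega⟩
  exact key m a ha α F hF G (fun i => by have := hG i; omega)
end

section
/- For a partition μ = (μ₁,…,μ_m) of n with m > 1 conjugate data m_i = #{k : μ_k ≥ i}, the quantity d_YHZ(μ) = ∏_{j=1}^{μ₂}(2m_j − 1) · c, where c = 1 if μ₁ = μ₂, c = 1 + 2/(2m_{μ₂}−1) if μ₁ = μ₂+1, and c = 2(μ₁−μ₂)−1 if μ₁ > μ₂+1, satisfies d_YHZ(μ) ≥ 2n + 3^{μ₂} − 4μ₂. -/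
lemma dYHZ_key (t : ℕ) (a : ℕ → ℕ) (ha : ∀ j ∈ Finset.Icc 1 t, 2 ≤ a j) :
    2 * ∑ j ∈ Finset.Icc 1 t, (a j : ℚ) + 3 ^ t - 4 * t ≤
      ∏ j ∈ Finset.Icc 1 t, (2 * (a j : ℚ) - 1) := by
  induction t with
  | zero => simp
  | succ t ih =>
    rw [Finset.prod_Icc_succ_top (by omega), Finset.sum_Icc_succ_top (by omega)]
    have hP := ih (fun j hj => ha j (by simp at hj ⊢; omega))
    have hS : (2 * t : ℚ) ≤ ∑ j ∈ Finset.Icc 1 t, (a j : ℚ) := by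
      have : ∑ j ∈ Finset.Icc 1 t, (2:ℚ) ≤ ∑ j ∈ Finset.Icc 1 t, (a j : ℚ) := by
        apply Finset.sum_le_sum
        intro j hj; exact_mod_cast ha j (by simp at hj ⊢; omega)
      simpa [Nat.card_Icc, mul_comm] using this
    have hA : (2:ℚ) ≤ (a (t+1) : ℚ) := by exact_mod_cast ha (t+1) (by simp)
    have h3 : (1:ℚ) ≤ 3 ^ t := one_le_pow₀ (by norm_num)
    have hmul := mul_le_mul_of_nonneg_right hP (by linarith : (0:ℚ) ≤ 2 * (a (t+1):ℚ) - 1)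
    have h3s : (3:ℚ)^(t+1) = 3 * 3^t := by ring
    push_cast [h3s]
    nlinarith [mul_nonneg (by linarith : (0:ℚ) ≤ ∑ j ∈ Finset.Icc 1 t, (a j : ℚ) - 2*t)
        (by linarith : (0:ℚ) ≤ (a (t+1):ℚ) - 1),
      mul_nonneg (by linarith : (0:ℚ) ≤ (3:ℚ)^t - 1) (by linarith : (0:ℚ) ≤ (a (t+1):ℚ) - 2)]

/-- Let `μ = (μ₁,…,μ_m)` be a partition of `n` with `m > 1` parts and
`m_i = #{k : μ_k ≥ i}`.  Then `d_YHZ(μ) = (∏_{j=1}^{μ₂}(2m_j − 1))·c`, where `c = 1`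
if `μ₁ = μ₂`, `c = 1 + 2/(2m_{μ₂}−1)` if `μ₁ = μ₂+1`, and `c = 2(μ₁−μ₂)−1` if
`μ₁ > μ₂+1`, satisfies `d_YHZ(μ) ≥ 2n + 3^{μ₂} − 4μ₂`. -/
theorem dYHZ_lower_bound (n m : ℕ) (hm : 1 < m) (μ : Fin m → ℕ)
    (hanti : Antitone μ) (hpos : ∀ k, 0 < μ k) (hsum : ∑ k, μ k = n) :
    (∏ j ∈ Finset.Icc 1 (μ ⟨1, hm⟩),
        (2 * (((Finset.univ.filter fun k => j ≤ μ k).card : ℚ)) - 1))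
      * (if μ ⟨0, Nat.lt_of_lt_of_le Nat.zero_lt_one hm.le⟩ = μ ⟨1, hm⟩ then (1 : ℚ)
        else if μ ⟨0, Nat.lt_of_lt_of_le Nat.zero_lt_one hm.le⟩ = μ ⟨1, hm⟩ + 1 then
          1 + 2 / (2 * (((Finset.univ.filter fun k => μ ⟨1, hm⟩ ≤ μ k).card : ℚ)) - 1)
        else 2 * ((μ ⟨0, Nat.lt_of_lt_of_le Nat.zero_lt_one hm.le⟩ : ℚ) - (μ ⟨1, hm⟩ : ℚ)) - 1)
      ≥ 2 * (n : ℚ) + 3 ^ (μ ⟨1, hm⟩) - 4 * (μ ⟨1, hm⟩ : ℚ) := by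
  classical
  set i0 : Fin m := ⟨0, Nat.lt_of_lt_of_le Nat.zero_lt_one hm.le⟩ with hi0
  set i1 : Fin m := ⟨1, hm⟩ with hi1
  set N : ℕ → ℕ := fun j => (Finset.univ.filter fun k => j ≤ μ k).card with hNdef
  have hNj : ∀ j, (Finset.univ.filter fun k : Fin m => j ≤ μ k).card = N j := fun _ => rfl
  simp only [hNj]
  set t := μ i1 with htdef
  set M := μ i0 with hMdef
  have hle0 : ∀ k : Fin m, μ k ≤ M := fun k => hanti (by simp [Fin.le_def, hi0])
  have htM : t ≤ M := hle0 i1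
  have ht1 : 1 ≤ t := hpos i1
  have hN2 : ∀ j ∈ Finset.Icc 1 t, 2 ≤ N j := by
    intro j hj
    simp only [Finset.mem_Icc] at hj
    have h0 : i0 ∈ Finset.univ.filter fun k : Fin m => j ≤ μ k := by
      simp; omega
    have h1 : i1 ∈ Finset.univ.filter fun k : Fin m => j ≤ μ k := by
      simp; omega
    have hne : i0 ≠ i1 := by simp [hi0, hi1, Fin.ext_iff]
    exact Finset.one_lt_card.mpr ⟨i0, h0, i1, h1, hne⟩
  have hsum' : ∑ k, μ k = ∑ j ∈ Finset.Icc 1 M, N j := by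
    have h1 : ∀ k : Fin m, μ k = ∑ j ∈ Finset.Icc 1 M, if j ≤ μ k then 1 else 0 := by
      intro k
      rw [← Finset.card_filter]
      have h2 : (Finset.Icc 1 M).filter (fun j => j ≤ μ k) = Finset.Icc 1 (μ k) := by
        ext j
        simp only [Finset.mem_filter, Finset.mem_Icc]
        have := hle0 k
        constructor
        · rintro ⟨⟨a, b⟩, c⟩; omega
        · rintro ⟨a, b⟩; omega
      rw [h2, Nat.card_Icc]; omega
    calc ∑ k, μ k = ∑ k : Fin m, ∑ j ∈ Finset.Icc 1 M, if j ≤ μ k then 1 else 0 :=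
          Finset.sum_congr rfl (fun k _ => h1 k)
      _ = ∑ j ∈ Finset.Icc 1 M, ∑ k : Fin m, if j ≤ μ k then 1 else 0 := Finset.sum_comm
      _ = ∑ j ∈ Finset.Icc 1 M, N j :=
          Finset.sum_congr rfl (fun j _ => (Finset.card_filter _ _).symm)
  have htail : ∀ j ∈ Finset.Ioc t M, N j = 1 := by
    intro j hj
    simp only [Finset.mem_Ioc] at hj
    have hfil : (Finset.univ.filter fun k : Fin m => j ≤ μ k) = {i0} := by
      ext k
      simp only [Finset.mem_filter, Finset.mem_univ, true_and, Finset.mem_singleton]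
      constructor
      · intro hk
        by_contra hne
        have h1k : i1 ≤ k := by
          rw [Fin.le_def]
          rcases Nat.eq_zero_or_pos k.val with h | h
          · exact absurd (Fin.ext (by simp [hi0, h]) : k = i0) hne
          · simpa [hi1]
        have := hanti h1k
        omega
      · rintro rfl; omega
    simp [hNdef, hfil]
  have hsplit : ∑ j ∈ Finset.Icc 1 M, N j = ∑ j ∈ Finset.Icc 1 t, N j + (M - t) := by
    have e1 : Finset.Icc 1 M = Finset.Ioc 0 M := by rw [← Finset.Icc_add_one_left_eq_Ioc]; rfl
    have e2 : Finset.Icc 1 t = Finset.Ioc 0 t := by rw [← Finset.Icc_add_one_left_eq_Ioc]; rfl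
    rw [e1, e2, ← Finset.sum_Ioc_consecutive _ (Nat.zero_le t) htM]
    congr 1
    rw [Finset.sum_congr rfl htail]
    simp [Nat.card_Ioc]
  have hnQ : (n : ℚ) = ∑ j ∈ Finset.Icc 1 t, (N j : ℚ) + ((M : ℚ) - t) := by
    have : n = ∑ j ∈ Finset.Icc 1 t, N j + (M - t) := by rw [← hsum, hsum', hsplit]
    rw [this]
    push_cast [Nat.cast_sub htM]
    ring
  have hkey := dYHZ_key t N hN2
  clear_value N t M
  by_cases hc1 : M = t
  · rw [if_pos hc1]
    have hMt0 : (M : ℚ) - t = 0 := by rw [hc1]; ring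
    rw [hnQ, hMt0, mul_one]
    linarith
  · rw [if_neg hc1]
    by_cases hc2 : M = t + 1
    · rw [if_pos hc2]
      obtain ⟨s, rfl⟩ : ∃ s, t = s + 1 := ⟨t - 1, by omega⟩
      rw [Finset.prod_Icc_succ_top (by omega : 1 ≤ s + 1)]
      rw [Finset.sum_Icc_succ_top (by omega : 1 ≤ s + 1)] at hnQ
      have hkey' := dYHZ_key s N (fun j hj => hN2 j (by simp at hj ⊢; omega))
      have hS : (2 * s : ℚ) ≤ ∑ j ∈ Finset.Icc 1 s, (N j : ℚ) := by
        have : ∑ j ∈ Finset.Icc 1 s, (2:ℚ) ≤ ∑ j ∈ Finset.Icc 1 s, (N j : ℚ) := by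
          apply Finset.sum_le_sum
          intro j hj
          exact_mod_cast hN2 j (by simp at hj ⊢; omega)
        simpa [Nat.card_Icc, mul_comm] using this
      have hA : (2:ℚ) ≤ (N (s+1) : ℚ) := by exact_mod_cast hN2 (s+1) (by simp)
      have h3 : (1:ℚ) ≤ 3 ^ s := one_le_pow₀ (by norm_num)
      have hcmul : (2 * (N (s+1) : ℚ) - 1) * (1 + 2 / (2 * (N (s+1) : ℚ) - 1))
          = 2 * (N (s+1) : ℚ) + 1 := by
        have hne : (2 * (N (s+1) : ℚ) - 1) ≠ 0 := by intro h; linarith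
        field_simp
        ring
      have hMQ : (M : ℚ) = (s : ℚ) + 2 := by rw [hc2]; push_cast; ring
      rw [mul_assoc, hcmul, hnQ, hMQ]
      have hmul := mul_le_mul_of_nonneg_right hkey'
        (by linarith : (0:ℚ) ≤ 2 * (N (s+1):ℚ) + 1)
      have h3s : (3:ℚ)^(s+1) = 3 * 3^s := by ring
      push_cast [h3s]
      nlinarith [mul_nonneg (by linarith : (0:ℚ) ≤ ∑ j ∈ Finset.Icc 1 s, (N j : ℚ) - 2*s)
          (by linarith : (0:ℚ) ≤ (N (s+1):ℚ)),
        mul_nonneg (by linarith : (0:ℚ) ≤ (3:ℚ)^s - 1)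
          (by linarith : (0:ℚ) ≤ (N (s+1):ℚ) - 1)]
    · rw [if_neg hc2]
      have hs2 : (2:ℚ) ≤ (M : ℚ) - t := by
        have h1 : t + 2 ≤ M := by omega
        have h2 : ((t:ℚ) + 2) ≤ (M:ℚ) := by exact_mod_cast h1
        linarith
      have hP3 : (3:ℚ) ^ t ≤ ∏ j ∈ Finset.Icc 1 t, (2 * (N j : ℚ) - 1) := by
        have := Finset.prod_le_prod (s := Finset.Icc 1 t)
          (f := fun _ => (3:ℚ)) (g := fun j => 2 * (N j : ℚ) - 1)
          (fun j _ => by show (0:ℚ) ≤ 3; norm_num)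
          (fun j hj => by
            show (3:ℚ) ≤ 2 * (N j : ℚ) - 1
            have h1 := hN2 j hj
            have h2 : (2:ℚ) ≤ (N j : ℚ) := by exact_mod_cast h1
            linarith)
        simpa [Nat.card_Icc] using this
      have h33 : (3:ℚ) ≤ 3 ^ t := by
        calc (3:ℚ) = 3 ^ 1 := by norm_num
          _ ≤ 3 ^ t := pow_le_pow_right₀ (by norm_num) ht1
      rw [hnQ]
      nlinarith [mul_nonneg
          (by linarith : (0:ℚ) ≤ (∏ j ∈ Finset.Icc 1 t, (2 * (N j : ℚ) - 1)) - 3)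
          (by linarith : (0:ℚ) ≤ (M:ℚ) - t - 1)]
end

section
/- For a univariate polynomial F of degree n with leading coefficient a_n, the determinant polynomial of the stack (F x^{γ₀−1},…,F x^0, F' x^{γ₁−1},…,F' x^0, …, F^{(s)} x^{γ_s−1},…, F^{(s)} x^0), where γ₀ = γ₁ − 1 and γ = (γ₁,…,γ_s) is a partition of n, equals a_n^{γ₁−n} times the determinant polynomial of the stack (F x^{n−2},…,F x^0, F' x^{γ₁−1},…,F^{(s)} x^0) obtained by extending the F-block up to x^{n−2}. -/
open Polynomial

/-- The determinant polynomial of a list `L` of `N` polynomials (of degree `≤ N−1`):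
the determinant of the `N×N` matrix whose `i`-th row lists the coefficients of
`L i` from `x^{N−1}` down to `x^0`. -/
noncomputable def dpList {R : Type*} [CommRing R] (L : List (Polynomial R)) : R :=
  Matrix.det (Matrix.of fun i j : Fin L.length => (L.get i).coeff (L.length - 1 - (j : ℕ)))

/-- The stack of rows `F^{(i)}·x^{Γᵢ−1}, …, F^{(i)}·x^0` for `i = 0, …` running
through the list `Γ = (Γ₀, Γ₁, …)`. -/
noncomputable def stackRows {R : Type*} [CommRing R] (F : Polynomial R) (Γ : List ℕ) :
    List (Polynomial R) :=
  (Γ.zipIdx.map Prod.swap).flatMap fun ig => ((List.range ig.2).reverse).map fun e => derivative^[ig.1] F * X ^ e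

/-- A partition of `n`: a weakly decreasing list of positive integers summing to `n`. -/
def IsPartition (γ : List ℕ) (n : ℕ) : Prop :=
  γ.Pairwise (· ≥ ·) ∧ (∀ x ∈ γ, 0 < x) ∧ γ.sum = n

lemma stackRows_cons_succ {R : Type*} [CommRing R] (F : Polynomial R) (m : ℕ) (γ : List ℕ) :
    stackRows F ((m+1) :: γ) = (F * X ^ m) :: stackRows F (m :: γ) := by
  simp [stackRows, List.zipIdx_cons, List.range_succ]

lemma stackRows_length {R : Type*} [CommRing R] (F : Polynomial R) (Γ : List ℕ) :
    (stackRows F Γ).length = Γ.sum := by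
  simp [stackRows, List.length_flatMap, Function.comp_def]

lemma dpList_cons {R : Type*} [CommRing R] (P : Polynomial R) (L : List (Polynomial R))
    (h : ∀ Q ∈ L, Q.coeff L.length = 0) :
    dpList (P :: L) = P.coeff L.length * dpList L := by
  rw [dpList, dpList]
  rw [show (Matrix.of fun i j : Fin (P :: L).length => ((P :: L).get i).coeff
      ((P :: L).length - 1 - (j : ℕ))) = (Matrix.of fun i j : Fin (L.length + 1) =>
      ((P :: L).get i).coeff (L.length - (j : ℕ))) from rfl]
  rw [Matrix.det_succ_column_zero, Finset.sum_eq_single 0]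
  · simp only [Fin.val_zero, pow_zero, one_mul, Fin.succAbove_zero]
    congr 1
    congr 1
    ext i j
    simp only [Matrix.submatrix_apply, Matrix.of_apply, List.get_cons_succ, Fin.val_succ]
    congr 1
    omega
  · intro i _ hi
    rcases Fin.eq_zero_or_eq_succ i with rfl | ⟨j, rfl⟩
    · exact absurd rfl hi
    · have : L[(j : ℕ)].coeff L.length = 0 := h _ (List.getElem_mem _)
      simp [this]
  · intro h'; exact absurd (Finset.mem_univ _) h'

/-- For `F` of degree `n` with leading coefficient `a_n ≠ 0` and a
partition `γ = (γ₁,…,γ_s)` of `n` with `γ₀ := γ₁ − 1`, the determinant polynomial of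
the stack `(F x^{γ₀−1},…,F x^0, F' x^{γ₁−1},…,F^{(s)} x^0)` equals `a_n^{γ₁−n}` times
the determinant polynomial of the stack extended so that the `F`-block runs from
`x^{n−2}` down to `x^0`. -/
theorem dp_reduced_eq_pow_mul_dp_extended (n : ℕ) (hn : 1 ≤ n) (F : Polynomial ℂ)
    (hdeg : F.natDegree = n) (ha : F.coeff n ≠ 0)
    (γ : List ℕ) (hγ : IsPartition γ n) (hne : γ ≠ []) :
    dpList (stackRows F ((γ.headI - 1) :: γ))
      = (F.coeff n) ^ ((γ.headI : ℤ) - (n : ℤ)) * dpList (stackRows F ((n - 1) :: γ)) := by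
  obtain ⟨hsort, hpos, hsum⟩ := hγ
  obtain ⟨g, t, rfl⟩ : ∃ g t, γ = g :: t := by
    cases γ with
    | nil => exact absurd rfl hne
    | cons g t => exact ⟨g, t, rfl⟩
  set a := F.coeff n with ha_def
  have hg1 : 0 < g := hpos _ (by simp)
  have hsum' : g + t.sum = n := by simpa using hsum
  have hgn : g ≤ n := by omega
  have hble : ∀ b ∈ t, b ≤ g := fun b hb => (List.pairwise_cons.mp hsort).1 b hb
  have hlen : ∀ m, (stackRows F (m :: g :: t)).length = m + n := by
    intro m
    rw [stackRows_length]
    simp only [List.sum_cons]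
    omega
  have hvan : ∀ m, g - 1 ≤ m → ∀ Q ∈ stackRows F (m :: g :: t),
      Q.coeff ((stackRows F (m :: g :: t)).length) = 0 := by
    intro m hm Q hQ
    rw [hlen]
    rw [stackRows, List.mem_flatMap] at hQ
    obtain ⟨⟨i, v⟩, hiv, hQ⟩ := hQ
    rw [List.mem_map] at hQ
    obtain ⟨e, he, rfl⟩ := hQ
    have he' : e < v := by
      rw [List.mem_reverse, List.mem_range] at he
      exact he
    show (derivative^[i] F * X ^ e).coeff (m + n) = (0 : ℂ)
    apply coeff_eq_zero_of_natDegree_lt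
    have hd : (derivative^[i] F * X ^ e).natDegree ≤ (derivative^[i] F).natDegree + e :=
      natDegree_mul_le.trans (by simp)
    have hget : (m :: g :: t)[i]? = some v := by
      rw [List.mem_map] at hiv
      obtain ⟨⟨v', i'⟩, h1, h2⟩ := hiv
      simp only [Prod.swap_prod_mk, Prod.mk.injEq] at h2
      obtain ⟨rfl, rfl⟩ := h2
      exact List.mk_mem_zipIdx_iff_getElem?.mp h1
    cases i with
    | zero =>
      have hv : v = m := by
        simp only [List.getElem?_cons_zero, Option.some.injEq] at hget
        omega
      have : (derivative^[0] F).natDegree = n := by simpa using hdeg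
      have : (derivative^[0] F * X ^ e).natDegree ≤ n + e := by omega
      omega
    | succ j =>
      have hv : v ∈ g :: t := by
        simp only [List.getElem?_cons_succ] at hget
        obtain ⟨h1, h2⟩ := List.getElem?_eq_some_iff.mp hget
        exact h2 ▸ List.getElem_mem h1
      have hvg : v ≤ g := by
        rcases List.mem_cons.mp hv with rfl | hv'
        · exact le_refl _
        · exact hble _ hv'
      have hnd : (derivative^[j+1] F).natDegree ≤ n - 1 := by
        have := natDegree_iterate_derivative F (j+1)
        omega
      omega
  have hstep : ∀ m, g - 1 ≤ m →
      dpList (stackRows F ((m+1) :: g :: t)) = a * dpList (stackRows F (m :: g :: t)) := by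
    intro m hm
    rw [stackRows_cons_succ, dpList_cons _ _ (hvan m hm)]
    congr 1
    rw [hlen, add_comm m n, coeff_mul_X_pow]
  have hiter : ∀ d, dpList (stackRows F ((g - 1 + d) :: g :: t))
      = a ^ d * dpList (stackRows F ((g - 1) :: g :: t)) := by
    intro d
    induction d with
    | zero => simp
    | succ d ih =>
      rw [show g - 1 + (d+1) = (g-1+d)+1 from rfl, hstep _ (by omega), ih, pow_succ]
      ring
  have key := hiter (n - g)
  rw [show g - 1 + (n - g) = n - 1 from by omega] at key
  have hhead : (g :: t).headI = g := rfl
  rw [hhead, key, ← mul_assoc]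
  have hone : a ^ ((g : ℤ) - (n : ℤ)) * a ^ (n - g) = 1 := by
    rw [← zpow_natCast a (n - g), ← zpow_add₀ ha]
    rw [show ((g : ℤ) - (n : ℤ)) + ((n - g : ℕ) : ℤ) = 0 from by push_cast [hgn]; ring]
    exact zpow_zero a
  rw [hone, one_mul]
end
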